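/- Let a ∈ ℝⁿ (n ≥ 2). Then for every Chebyshev vector v ∈ ℝⁿ the unique minimizer μ(a,v) of u ↦ ‖a - u·v‖_∞ is non-zero if and only if a is alternance-free. -/
import Mathlib


open Filter

/-- A vector is Chebyshev if all of its components are non-zero. -/
def Cheb {n : ℕ} (v : Fin n → ℝ) : Prop := ∀ i, v i ≠ 0

/-- `mu a v` is the (unique, when `v` is Chebyshev) minimizer of `u ↦ ‖a - u • v‖`,
where `‖·‖` is the sup-norm on `Fin n → ℝ`. -/
noncomputable def mu {n : ℕ} (a v : Fin n → ℝ) : ℝ :=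
  Classical.epsilon fun t : ℝ => ∀ u : ℝ, ‖a - t • v‖ ≤ ‖a - u • v‖

noncomputable def phi {m n : ℕ} (A : Fin m → Fin n → ℝ) (v : Fin n → ℝ) : Fin m → ℝ :=
  fun i => mu (A i) v

noncomputable def psi {m n : ℕ} (A : Fin m → Fin n → ℝ) (u : Fin m → ℝ) : Fin n → ℝ :=
  fun j => mu (fun i => A i j) u

/-- `A` preserves Chebyshev systems. -/
def PreservesCheb {m n : ℕ} (A : Fin m → Fin n → ℝ) : Prop :=
  (∀ v : Fin n → ℝ, Cheb v → Cheb (phi A v)) ∧ (∀ u : Fin m → ℝ, Cheb u → Cheb (psi A u))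

/-- A vector is alternance-free if exactly one component attains the max absolute value. -/
def AlternanceFree {n : ℕ} (a : Fin n → ℝ) : Prop := ∃! i, |a i| = ‖a‖

/-- Chebyshev norm of the residual `A - u vᵀ`. -/
noncomputable def Cerr {m n : ℕ} (A : Fin m → Fin n → ℝ) (u : Fin m → ℝ) (v : Fin n → ℝ) : ℝ :=
  ⨆ i, ⨆ j, |A i j - u i * v j|

/-- Chebyshev norm of a matrix. -/
noncomputable def CnormM {m n : ℕ} (A : Fin m → Fin n → ℝ) : ℝ :=
  ⨆ i, ⨆ j, |A i j|

/-- The sequence `v⁽ᵏ⁾` of the alternating minimization method started at `v0`. -/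
noncomputable def vseq {m n : ℕ} (A : Fin m → Fin n → ℝ) (v0 : Fin n → ℝ) : ℕ → Fin n → ℝ
  | 0 => v0
  | k + 1 => psi A (phi A (vseq A v0 k))


lemma exists_abs_eq_norm {n : ℕ} (hn : 0 < n) (a : Fin n → ℝ) : ∃ i, |a i| = ‖a‖ := by
  obtain ⟨i, -, hi⟩ := Finset.exists_max_image Finset.univ (fun i => |a i|)
    ⟨⟨0, hn⟩, Finset.mem_univ _⟩
  refine ⟨i, le_antisymm ?_ ?_⟩
  · simpa [Real.norm_eq_abs] using norm_le_pi_norm a i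
  · rw [pi_norm_le_iff_of_nonneg (abs_nonneg _)]
    intro j
    simpa [Real.norm_eq_abs] using hi j (Finset.mem_univ _)

lemma exists_min {n : ℕ} (hn : 0 < n) (a v : Fin n → ℝ) (hv : v ⟨0, hn⟩ ≠ 0) :
    ∃ t : ℝ, ∀ u : ℝ, ‖a - t • v‖ ≤ ‖a - u • v‖ := by
  set i0 : Fin n := ⟨0, hn⟩
  set c : ℝ := |v i0| with hc
  have hc0 : 0 < c := abs_pos.mpr hv
  set R : ℝ := (2 * ‖a‖ + 1) / c with hR
  have hRpos : 0 < R := div_pos (by positivity) hc0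
  have hf : Continuous fun u : ℝ => ‖a - u • v‖ :=
    (continuous_const.sub (continuous_id.smul continuous_const)).norm
  obtain ⟨t0, ht0mem, ht0min⟩ := (isCompact_Icc (a := -R) (b := R)).exists_isMinOn
    ⟨0, by constructor <;> [linarith; linarith]⟩ hf.continuousOn
  refine ⟨t0, fun u => ?_⟩
  rcases le_or_gt (|u|) R with h | h
  · exact ht0min ⟨neg_le_of_abs_le h, le_of_abs_le h⟩
  · have h0 : ‖a - t0 • v‖ ≤ ‖a - (0:ℝ) • v‖ := ht0min ⟨by linarith, by linarith⟩
    have h1 : ‖a - (0:ℝ) • v‖ = ‖a‖ := by simp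
    have h2 : |a i0 - u * v i0| ≤ ‖a - u • v‖ := by
      simpa [Real.norm_eq_abs] using norm_le_pi_norm (a - u • v) i0
    have h3 : |u| * c - |a i0| ≤ |a i0 - u * v i0| := by
      have := abs_sub_abs_le_abs_sub (u * v i0) (a i0)
      rw [abs_mul] at this
      calc |u| * c - |a i0| ≤ |u * v i0 - a i0| := this
        _ = |a i0 - u * v i0| := abs_sub_comm _ _
    have h4 : |a i0| ≤ ‖a‖ := by
      simpa [Real.norm_eq_abs] using norm_le_pi_norm a i0
    have h5 : R * c = 2 * ‖a‖ + 1 := div_mul_cancel₀ _ (ne_of_gt hc0)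
    have h6 : R * c ≤ |u| * c := mul_le_mul_of_nonneg_right h.le hc0.le
    nlinarith [norm_nonneg a]

lemma mu_spec {n : ℕ} (hn : 0 < n) (a v : Fin n → ℝ) (hv : v ⟨0, hn⟩ ≠ 0) :
    ∀ u : ℝ, ‖a - mu a v • v‖ ≤ ‖a - u • v‖ :=
  Classical.epsilon_spec (exists_min hn a v hv)

theorem stmt2 {n : ℕ} (hn : 2 ≤ n) (a : Fin n → ℝ) :
    (∀ v : Fin n → ℝ, Cheb v → mu a v ≠ 0) ↔ AlternanceFree a := by
  have hn0 : 0 < n := by omega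
  have : Nontrivial (Fin n) := Fin.nontrivial_iff_two_le.mpr hn
  constructor
  · intro h
    by_contra hA
    obtain ⟨i, hi⟩ := exists_abs_eq_norm hn0 a
    have hij : ∃ j, |a j| = ‖a‖ ∧ j ≠ i := by
      by_contra hcon
      push_neg at hcon
      exact hA ⟨i, hi, hcon⟩
    obtain ⟨j, hj, hji⟩ := hij
    rcases eq_or_lt_of_le (norm_nonneg a) with hM | hM
    · -- a = 0
      have ha : a = 0 := norm_eq_zero.mp hM.symm
      set v : Fin n → ℝ := fun _ => (1:ℝ) with hvdef
      have hCv : Cheb v := fun _ => one_ne_zero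
      have hmu := mu_spec hn0 a v (hCv ⟨0, hn0⟩)
      set m := mu a v with hmdef
      have h0 := hmu 0
      rw [ha] at h0
      simp only [zero_smul, sub_zero, zero_sub, norm_neg, norm_zero, norm_le_zero_iff] at h0
      have hm0 : m = 0 := by
        have := congrFun h0 ⟨0, hn0⟩
        simpa [hvdef] using this
      exact h v hCv hm0
    · -- ‖a‖ > 0, two maximizers
      have hai : a i ≠ 0 := by
        intro hz; rw [← hi, hz, abs_zero] at hM; exact lt_irrefl _ hM
      have haj : a j ≠ 0 := by
        intro hz; rw [← hj, hz, abs_zero] at hM; exact lt_irrefl _ hM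
      set v : Fin n → ℝ := fun k => if k = i then a i else if k = j then -(a j) else 1 with hvdef
      have hCv : Cheb v := by
        intro k
        simp only [hvdef]
        split_ifs with h1 h2
        · exact hai
        · exact neg_ne_zero.mpr haj
        · exact one_ne_zero
      have hvi : v i = a i := by simp [hvdef]
      have hvj : v j = -(a j) := by simp [hvdef, hji]
      have key : ∀ u : ℝ, ‖a‖ * (1 + |u|) ≤ ‖a - u • v‖ := by
        intro u
        rcases le_or_gt 0 u with hu | hu
        · have hcomp : (a - u • v) j = a j * (1 + u) := by
            rw [Pi.sub_apply, Pi.smul_apply, smul_eq_mul, hvj]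
            ring
          have := norm_le_pi_norm (a - u • v) j
          rw [Real.norm_eq_abs, hcomp, abs_mul, hj, abs_of_nonneg (by linarith : (0:ℝ) ≤ 1 + u)] at this
          rwa [abs_of_nonneg hu]
        · have hcomp : (a - u • v) i = a i * (1 - u) := by
            rw [Pi.sub_apply, Pi.smul_apply, smul_eq_mul, hvi]
            ring
          have := norm_le_pi_norm (a - u • v) i
          rw [Real.norm_eq_abs, hcomp, abs_mul, hi, abs_of_nonneg (by linarith : (0:ℝ) ≤ 1 - u)] at this
          rwa [abs_of_neg hu, show 1 + -u = 1 - u by ring]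
      have hmu := mu_spec hn0 a v (hCv ⟨0, hn0⟩)
      have h0 := hmu 0
      rw [zero_smul, sub_zero] at h0
      have h1 := key (mu a v)
      have h2 : |mu a v| ≤ 0 := by nlinarith [abs_nonneg (mu a v)]
      exact h v hCv (abs_eq_zero.mp (le_antisymm h2 (abs_nonneg _)))
  · intro hA v hCv
    obtain ⟨i, hi, huniq⟩ := hA
    have hmu := mu_spec hn0 a v (hCv ⟨0, hn0⟩)
    set M : ℝ := ‖a‖ with hMdef
    have hM : 0 < M := by
      rcases eq_or_lt_of_le (norm_nonneg a) with h0 | h0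
      · exfalso
        have ha : a = 0 := norm_eq_zero.mp h0.symm
        obtain ⟨j, hji⟩ := exists_ne i
        have : j = i := huniq j (by simp [ha, hMdef])
        exact hji this
      · exact h0
    set s : Finset (Fin n) := Finset.univ.erase i with hsdef
    have hs : s.Nonempty := by
      obtain ⟨j, hji⟩ := exists_ne i
      exact ⟨j, Finset.mem_erase.mpr ⟨hji, Finset.mem_univ _⟩⟩
    set M' : ℝ := s.sup' hs (fun k => |a k|) with hM'def
    have hM' : M' < M := by
      rw [hM'def, Finset.sup'_lt_iff]
      intro k hk
      have hki : k ≠ i := (Finset.mem_erase.mp hk).1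
      have hle : |a k| ≤ M := by simpa [Real.norm_eq_abs] using norm_le_pi_norm a k
      refine lt_of_le_of_ne hle fun heq => hki (huniq k heq)
    intro hmu0
    set C : ℝ := ‖v‖ with hCdef
    have hC : 0 ≤ C := norm_nonneg v
    set c : ℝ := |v i| with hcdef
    have hc0 : 0 < c := abs_pos.mpr (hCv i)
    set D : ℝ := M - M' with hDdef
    have hD : 0 < D := by rw [hDdef]; linarith
    set ε : ℝ := min 1 (D * c / (2 * M * (C + 1))) with hεdef
    have hden : 0 < 2 * M * (C + 1) := by positivity
    have hε0 : 0 < ε := lt_min one_pos (div_pos (mul_pos hD hc0) hden)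
    have hε1 : ε ≤ 1 := min_le_left _ _
    have hε2 : ε * (2 * M * (C + 1)) ≤ D * c := by
      have := min_le_right 1 (D * c / (2 * M * (C + 1)))
      rw [le_div_iff₀ hden] at this
      calc ε * (2 * M * (C + 1)) ≤ (D * c / (2 * M * (C + 1))) * (2 * M * (C + 1)) :=
            mul_le_mul_of_nonneg_right (min_le_right _ _) hden.le
        _ = D * c := div_mul_cancel₀ _ (ne_of_gt hden)
    set t : ℝ := ε * a i / v i with htdef
    have htabs : |t| = ε * M / c := by
      rw [htdef, abs_div, abs_mul, abs_of_pos hε0, hcdef]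
      congr 1
      rw [hi]
    have hlt : ‖a - t • v‖ < M := by
      rw [pi_norm_lt_iff hM]
      intro k
      rw [Real.norm_eq_abs, Pi.sub_apply, Pi.smul_apply, smul_eq_mul]
      by_cases hk : k = i
      · subst hk
        have : t * v k = ε * a k := by
          rw [htdef, div_mul_cancel₀ _ (hCv k)]
        rw [this, show a k - ε * a k = (1 - ε) * a k by ring, abs_mul,
          abs_of_nonneg (by linarith : (0:ℝ) ≤ 1 - ε), hi]
        nlinarith
      · have hak : |a k| ≤ M' := by
          rw [hM'def]
          exact Finset.le_sup' (fun k => |a k|) (Finset.mem_erase.mpr ⟨hk, Finset.mem_univ _⟩)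
        have hvk : |v k| ≤ C := by
          simpa [Real.norm_eq_abs] using norm_le_pi_norm v k
        have h1 : |a k - t * v k| ≤ |a k| + |t| * |v k| := by
          rw [sub_eq_add_neg, ← abs_mul, ← abs_neg (t * v k)]
          exact abs_add_le _ _
        have h2 : |t| * |v k| ≤ ε * M / c * C := by
          rw [htabs]
          exact mul_le_mul_of_nonneg_left hvk (by positivity)
        have h3 : ε * M / c * C ≤ D / 2 := by
          rw [div_mul_eq_mul_div, div_le_div_iff₀ hc0 two_pos]
          nlinarith [mul_nonneg hε0.le hM.le]
        calc |a k - t * v k| ≤ M' + D / 2 := by linarith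
          _ < M := by rw [hDdef]; linarith
    have hge := hmu t
    rw [hmu0, zero_smul, sub_zero] at hge
    exact absurd (lt_of_le_of_lt hge hlt) (lt_irrefl M)
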